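/- Let A₁, A₂ be unital C*-algebras, φ : A₁ → A₂ a surjective unital *-homomorphism, F a finite dimensional C*-algebra, λ₁ : F → A₁ a unital *-homomorphism, and λ₂ = φ ∘ λ₁. For s = 1,2 let B_s be the relative commutant of λ_s(F) in A_s. Then φ restricts to a surjective homomorphism from B₁ onto B₂. -/

import Mathlib

open LinearMap Module Polynomial

/-- In a C⋆-algebra, a selfadjoint nilpotent element is zero. -/
lemma aux_sa_nilpotent_eq_zero {F : Type*} [NormedRing F] [StarRing F] [CStarRing F]
    {z : F} (hz : IsSelfAdjoint z) (hn : IsNilpotent z) : z = 0 := by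
  have key : ∀ m : ℕ, z ^ (2 ^ m) = 0 → z = 0 := by
    intro m
    induction m with
    | zero => intro h; simpa using h
    | succ m ih =>
      intro h
      apply ih
      have h1 : star (z ^ (2 ^ m)) * z ^ (2 ^ m) = 0 := by
        rw [(hz.pow (2 ^ m)).star_eq, ← pow_add]
        have : 2 ^ m + 2 ^ m = 2 ^ (m + 1) := by ring
        rw [this, h]
      have h2 : ‖z ^ (2 ^ m)‖ * ‖z ^ (2 ^ m)‖ = 0 := by
        rw [← CStarRing.norm_star_mul_self, h1, norm_zero]
      have h3 : ‖z ^ (2 ^ m)‖ = 0 := by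
        rcases mul_self_eq_zero.mp h2 with h; exact h
      exact norm_eq_zero.mp h3
  obtain ⟨k, hk⟩ := hn
  apply key k
  have hle : k ≤ 2 ^ k := (Nat.lt_two_pow_self).le
  calc z ^ (2 ^ k) = z ^ k * z ^ (2 ^ k - k) := by rw [← pow_add, Nat.add_sub_cancel' hle]
  _ = 0 := by rw [hk, zero_mul]

/-- Nondegeneracy of the regular trace form on a finite-dimensional C⋆-algebra. -/
lemma aux_trace_ne_zero {F : Type*} [NormedRing F] [StarRing F] [CStarRing F] [CompleteSpace F]
    [NormedAlgebra ℂ F] [StarModule ℂ F] [FiniteDimensional ℂ F]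
    (x : F) (hx : x ≠ 0) :
    LinearMap.trace ℂ F (Algebra.lmul ℂ F (x * star x)) ≠ 0 := by
  classical
  letI : CStarAlgebra F :=
    { toNormedRing := inferInstance, toStarRing := inferInstance,
      toCompleteSpace := inferInstance, toCStarRing := inferInstance,
      toNormedAlgebra := inferInstance, toStarModule := inferInstance }
  set z := x * star x with hzdef
  have hz0 : z ≠ 0 := (CStarRing.mul_star_self_ne_zero_iff x).mpr hx
  have hzsa : IsSelfAdjoint z := IsSelfAdjoint.mul_star_self x
  set bb := Module.finBasis ℂ F with hbb
  set M := LinearMap.toMatrix bb bb (Algebra.lmul ℂ F z) with hM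
  -- every root of the characteristic polynomial is a nonnegative real
  have hroots : ∀ μ ∈ M.charpoly.roots, ∃ r : ℝ, 0 ≤ r ∧ μ = (r : ℂ) := by
    intro μ hμ
    have hIsRoot : M.charpoly.IsRoot μ :=
      (Polynomial.mem_roots (M.charpoly_monic.ne_zero)).mp hμ
    have hdet : (algebraMap ℂ (Matrix _ _ ℂ) μ - M).det = 0 := by
      have h1 : M.charpoly.eval μ = 0 := hIsRoot
      rw [Matrix.charpoly, eval_det, Matrix.matPolyEquiv_charmatrix,
        Polynomial.eval_sub, Polynomial.eval_X, Polynomial.eval_C] at h1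
      convert h1 using 3; rfl
    have hμs : μ ∈ spectrum ℂ z := by
      have hnu : ¬ IsUnit (algebraMap ℂ (Module.End ℂ F) μ - Algebra.lmul ℂ F z) := by
        intro hu
        have := hu.map (LinearMap.toMatrixAlgEquiv bb)
        rw [map_sub, AlgEquiv.commutes] at this
        have hdet' : IsUnit (algebraMap ℂ (Matrix _ _ ℂ) μ - M).det := by
          rw [← Matrix.isUnit_iff_isUnit_det]
          convert this using 2; rfl
        rw [hdet] at hdet'
        exact hdet'.ne_zero rfl
      exact AlgHom.spectrum_apply_subset (Algebra.lmul ℂ F) z (spectrum.mem_iff.mpr hnu)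
    have h1 : μ = (μ.re : ℂ) := hzsa.mem_spectrum_eq_re hμs
    have h2 : μ.re ∈ spectrum ℝ z := by
      rw [← spectrum.algebraMap_mem_iff (S := ℂ)]
      rw [h1] at hμs
      exact_mod_cast hμs
    have h3 : 0 ≤ μ.re := by
      have hzform : z = star (star x) * star x := by rw [star_star]
      rw [hzform] at h2
      exact spectrum_star_mul_self_nonneg μ.re h2
    exact ⟨μ.re, h3, h1⟩
  -- suppose the trace vanishes
  intro h0
  have htr : M.trace = 0 := by
    have h := LinearMap.trace_eq_matrix_trace ℂ bb (Algebra.lmul ℂ F z)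
    rw [h0] at h
    exact h.symm
  have hsum : M.charpoly.roots.sum = 0 := by
    rw [← Matrix.trace_eq_sum_roots_charpoly]; exact htr
  -- hence all roots vanish
  have hallzero : ∀ μ ∈ M.charpoly.roots, μ = 0 := by
    intro μ hμ
    obtain ⟨r, hr0, hrμ⟩ := hroots μ hμ
    have hμre : μ.re = r := by rw [hrμ]; simp
    have hrle : μ.re ≤ (M.charpoly.roots.map Complex.re).sum := by
      apply Multiset.single_le_sum
      · intro s hs
        obtain ⟨ν, hν, rfl⟩ := Multiset.mem_map.mp hs
        obtain ⟨r', hr'0, hr'ν⟩ := hroots ν hν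
        rw [hr'ν]; simpa using hr'0
      · exact Multiset.mem_map_of_mem _ hμ
    have hresum : (M.charpoly.roots.map Complex.re).sum = 0 := by
      have := map_multiset_sum Complex.reAddGroupHom M.charpoly.roots
      simp only [Complex.reAddGroupHom, AddMonoidHom.coe_mk, ZeroHom.coe_mk] at this
      rw [hsum] at this
      simpa using this.symm
    have hle0 : μ.re ≤ 0 := hresum ▸ hrle
    have hre0 : μ.re = 0 := le_antisymm hle0 (hμre ▸ hr0)
    rw [hrμ, ← hμre, hre0, Complex.ofReal_zero]
  -- hence the characteristic polynomial is a power of X and M is nilpotent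
  have hsplits : M.charpoly.Splits := IsAlgClosed.splits _
  have hcard : M.charpoly.roots.card = M.charpoly.natDegree :=
    Polynomial.splits_iff_card_roots.mp hsplits
  have hcp : M.charpoly = X ^ M.charpoly.natDegree := by
    have h := hsplits.eq_prod_roots_of_monic M.charpoly_monic
    have hmc : M.charpoly.roots.map (fun a => X - C a) =
        M.charpoly.roots.map (fun _ => (X : ℂ[X])) := by
      apply Multiset.map_congr rfl
      intro μ hμ
      rw [hallzero μ hμ]; simp
    have h2 : (M.charpoly.roots.map (fun a => X - C a)).prod = X ^ M.charpoly.natDegree := by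
      rw [hmc, Multiset.map_const', Multiset.prod_replicate, hcard]
    exact h.trans h2
  have hnM : IsNilpotent M := by
    refine ⟨M.charpoly.natDegree, ?_⟩
    have := M.aeval_self_charpoly
    rw [hcp] at this
    simpa using this
  have hnz : IsNilpotent z := by
    obtain ⟨k, hk⟩ := hnM
    refine ⟨k, ?_⟩
    have h1 : (LinearMap.toMatrixAlgEquiv bb) ((Algebra.lmul ℂ F z) ^ k) = 0 := by
      rw [map_pow]
      have : (LinearMap.toMatrixAlgEquiv bb) (Algebra.lmul ℂ F z) = M := by rw [hM]; rfl
      rw [this, hk]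
    have h2 : (Algebra.lmul ℂ F z) ^ k = 0 := by
      have := congrArg (LinearMap.toMatrixAlgEquiv bb).symm h1
      simpa using this
    have h3 : Algebra.lmul ℂ F (z ^ k) = 0 := by rw [map_pow, h2]
    calc z ^ k = Algebra.lmul ℂ F (z ^ k) 1 := by simp
    _ = 0 := by rw [h3]; simp
  exact hz0 (aux_sa_nilpotent_eq_zero hzsa hnz)

/-- The key commutation identity coming from dual bases of an associative bilinear form. -/
lemma aux_key_identity {F A : Type*} [Ring F] [Algebra ℂ F] [Ring A] [Algebra ℂ A]
    (τ : F →ₗ[ℂ] ℂ) {ι : Type*} [Fintype ι] (x y : ι → F)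
    (hexp1 : ∀ z : F, ∑ i, τ (y i * z) • x i = z)
    (hexp2 : ∀ z : F, ∑ i, τ (z * x i) • y i = z)
    (lam : F →ₐ[ℂ] A) (a : F) (u : A) :
    ∑ i, lam (a * x i) * u * lam (y i) = ∑ i, lam (x i) * u * lam (y i * a) := by
  have L : ∀ i, lam (a * x i) * u * lam (y i)
      = ∑ j, τ (y j * (a * x i)) • (lam (x j) * u * lam (y i)) := by
    intro i
    conv_lhs => rw [← hexp1 (a * x i)]
    rw [map_sum, Finset.sum_mul, Finset.sum_mul]
    refine Finset.sum_congr rfl fun j _ => ?_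
    rw [map_smul, smul_mul_assoc, smul_mul_assoc]
  have R : ∀ i, lam (x i) * u * lam (y i * a)
      = ∑ j, τ ((y i * a) * x j) • (lam (x i) * u * lam (y j)) := by
    intro i
    conv_lhs => rw [← hexp2 (y i * a)]
    rw [map_sum, Finset.mul_sum]
    refine Finset.sum_congr rfl fun j _ => ?_
    rw [map_smul, mul_smul_comm]
  calc ∑ i, lam (a * x i) * u * lam (y i)
      = ∑ i, ∑ j, τ (y j * (a * x i)) • (lam (x j) * u * lam (y i)) :=
        Finset.sum_congr rfl fun i _ => L i
    _ = ∑ j, ∑ i, τ (y j * (a * x i)) • (lam (x j) * u * lam (y i)) := Finset.sum_comm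
    _ = ∑ i, lam (x i) * u * lam (y i * a) := by
        refine Finset.sum_congr rfl fun i _ => ?_
        rw [R i]
        refine Finset.sum_congr rfl fun j _ => ?_
        congr 2
        rw [mul_assoc]

/-- Lemma 2.8 of the paper: a surjective unital homomorphism of unital C*-algebras restricts
to a surjection between the relative commutants of a unital image of a finite dimensional
C*-algebra. -/
theorem stmt8 {A₁ : Type*} [NormedRing A₁] [StarRing A₁] [CStarRing A₁] [CompleteSpace A₁]
    [NormedAlgebra ℂ A₁] [StarModule ℂ A₁]
    {A₂ : Type*} [NormedRing A₂] [StarRing A₂] [CStarRing A₂] [CompleteSpace A₂]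
    [NormedAlgebra ℂ A₂] [StarModule ℂ A₂]
    {F : Type*} [NormedRing F] [StarRing F] [CStarRing F] [CompleteSpace F]
    [NormedAlgebra ℂ F] [StarModule ℂ F] [FiniteDimensional ℂ F]
    (φ : A₁ →⋆ₐ[ℂ] A₂) (hφ : Function.Surjective φ)
    (lam₁ : F →⋆ₐ[ℂ] A₁) :
    ∀ b : A₂, (∀ x : F, b * φ (lam₁ x) = φ (lam₁ x) * b) →
      ∃ a : A₁, (∀ x : F, a * lam₁ x = lam₁ x * a) ∧ φ a = b := by
  classical
  intro b hb
  obtain ⟨a', ha'⟩ := hφ b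
  -- the regular trace functional
  set τ : F →ₗ[ℂ] ℂ := (LinearMap.trace ℂ F) ∘ₗ (Algebra.lmul ℂ F).toLinearMap with hτ
  have hτcomm : ∀ p q : F, τ (p * q) = τ (q * p) := by
    intro p q
    simp only [hτ, LinearMap.comp_apply, AlgHom.toLinearMap_apply, map_mul]
    exact LinearMap.trace_mul_comm ℂ _ _
  have hτnd : ∀ p : F, p ≠ 0 → τ (p * star p) ≠ 0 := by
    intro p hp
    simpa [hτ] using aux_trace_ne_zero p hp
  -- bilinear form, nondegenerate
  set B : LinearMap.BilinForm ℂ F := (LinearMap.mul ℂ F).compr₂ τ with hBdef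
  have hBapp : ∀ p q : F, B p q = τ (p * q) := fun p q => rfl
  have hB : B.Nondegenerate := by
    refine ⟨fun p hp => ?_, fun p hp => ?_⟩
    · by_contra h0
      exact hτnd p h0 (hp (star p))
    · by_contra h0
      exact hτnd p h0 (by rw [hτcomm]; exact hp (star p))
  set bb := Module.finBasis ℂ F with hbb
  set y := B.dualBasis hB bb with hy
  have hdual : ∀ i j, τ (y i * bb j) = if j = i then 1 else 0 := fun i j =>
    B.apply_dualBasis_left hB bb i j
  -- coefficient formulas
  have hrepr1 : ∀ (z : F) i, τ (y i * z) = bb.repr z i := by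
    intro z i
    conv_lhs => rw [← bb.sum_repr z]
    rw [Finset.mul_sum, map_sum]
    rw [Finset.sum_eq_single i]
    · rw [mul_smul_comm, map_smul, hdual]
      simp
    · intro j _ hj
      rw [mul_smul_comm, map_smul, hdual]
      simp [hj]
    · intro h; exact absurd (Finset.mem_univ i) h
  have hrepr2 : ∀ (z : F) i, τ (z * bb i) = y.repr z i := by
    intro z i
    conv_lhs => rw [← y.sum_repr z]
    rw [Finset.sum_mul, map_sum]
    rw [Finset.sum_eq_single i]
    · rw [smul_mul_assoc, map_smul, hdual]
      simp
    · intro j _ hj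
      rw [smul_mul_assoc, map_smul, hdual]
      simp [Ne.symm hj]
    · intro h; exact absurd (Finset.mem_univ i) h
  have hexp1 : ∀ z : F, ∑ i, τ (y i * z) • bb i = z := by
    intro z
    calc ∑ i, τ (y i * z) • bb i = ∑ i, bb.repr z i • bb i :=
          Finset.sum_congr rfl fun i _ => by rw [hrepr1]
    _ = z := bb.sum_repr z
  have hexp2 : ∀ z : F, ∑ i, τ (z * bb i) • y i = z := by
    intro z
    calc ∑ i, τ (z * bb i) • y i = ∑ i, y.repr z i • y i :=
          Finset.sum_congr rfl fun i _ => by rw [hrepr2]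
    _ = z := y.sum_repr z
  -- the regular trace of w equals ∑ i, τ (y i * (w * bb i))
  have htrace : ∀ w : F, τ w = ∑ i, τ (y i * (w * bb i)) := by
    intro w
    have h1 : τ w = Matrix.trace (LinearMap.toMatrix bb bb (Algebra.lmul ℂ F w)) := by
      simp only [hτ, LinearMap.comp_apply, AlgHom.toLinearMap_apply]
      exact LinearMap.trace_eq_matrix_trace ℂ bb _
    rw [h1, Matrix.trace]
    refine Finset.sum_congr rfl fun i _ => ?_
    rw [Matrix.diag_apply, LinearMap.toMatrix_apply, hrepr1]
    simp
  -- the Casimir element is 1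
  have hc : ∑ i, bb i * y i = (1 : F) := by
    rw [← sub_eq_zero]
    apply hB.1
    intro q
    rw [hBapp, sub_mul, one_mul, map_sub, sub_eq_zero, Finset.sum_mul, map_sum]
    calc ∑ i, τ (bb i * y i * q) = ∑ i, τ (y i * (q * bb i)) := by
          refine Finset.sum_congr rfl fun i _ => ?_
          rw [mul_assoc, hτcomm (bb i) (y i * q), mul_assoc]
    _ = τ q := (htrace q).symm
  -- the averaged lift
  refine ⟨∑ i, lam₁ (bb i) * a' * lam₁ (y i), ?_, ?_⟩
  · intro v
    have hk := aux_key_identity τ bb y hexp1 hexp2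
      (lam₁ : F →⋆ₐ[ℂ] A₁).toAlgHom v a'
    have hk' : ∑ i, lam₁ (v * bb i) * a' * lam₁ (y i)
        = ∑ i, lam₁ (bb i) * a' * lam₁ (y i * v) := by simpa using hk
    calc (∑ i, lam₁ (bb i) * a' * lam₁ (y i)) * lam₁ v
        = ∑ i, lam₁ (bb i) * a' * lam₁ (y i * v) := by
          rw [Finset.sum_mul]
          refine Finset.sum_congr rfl fun i _ => ?_
          rw [map_mul, mul_assoc]
    _ = ∑ i, lam₁ (v * bb i) * a' * lam₁ (y i) := hk'.symm
    _ = lam₁ v * ∑ i, lam₁ (bb i) * a' * lam₁ (y i) := by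
          rw [Finset.mul_sum]
          refine Finset.sum_congr rfl fun i _ => ?_
          simp only [map_mul, mul_assoc]
  · rw [map_sum]
    calc ∑ i, φ (lam₁ (bb i) * a' * lam₁ (y i))
        = ∑ i, φ (lam₁ (bb i)) * φ (lam₁ (y i)) * b := by
          refine Finset.sum_congr rfl fun i _ => ?_
          rw [map_mul, map_mul, ha', mul_assoc, hb (y i), ← mul_assoc]
    _ = φ (lam₁ (∑ i, bb i * y i)) * b := by
          rw [map_sum, map_sum, Finset.sum_mul]
          refine Finset.sum_congr rfl fun i _ => ?_
          rw [map_mul, map_mul]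
    _ = b := by rw [hc, map_one, map_one, one_mul]
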